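/- Fix d ≥ 1 and λ ∈ W^d. Consider the multivariate formal power series F̄(x₁,…,x_d) = a_λ(x) · Σ_{k≥0} (x₁ + x₂ + ⋯ + x_d)^k over ℚ, where a_λ(x) = det( x_i^{λ_j} )_{1≤i,j≤d}. Then for every μ ∈ ℤ^d with μ₁ ≥ μ₂ ≥ ⋯ ≥ μ_d ≥ 0 (the closure of W^d), the coefficient of x₁^{μ₁}⋯x_d^{μ_d} in F̄ equals f(λ;μ), the number of lattice walks from λ to μ with positive unit coordinate vector steps staying in W^d. -/

import Mathlib

open scoped BigOperators

/-- The `d`-dimensional Weyl chamber `W^d = {x ∈ ℤ^d : x₁ > x₂ > ⋯ > x_d > 0}`. -/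
def WeylChamber (d : ℕ) : Set (Fin d → ℤ) :=
  {x | (∀ i j : Fin d, i < j → x j < x i) ∧ ∀ i, 0 < x i}

/-- `q` is obtained from `p` by adding a positive unit coordinate vector. -/
def IsPosStep {d : ℕ} (p q : Fin d → ℤ) : Prop :=
  ∃ i : Fin d, q = p + Pi.single i 1

/-- A walk of length `n` starting at `lam`, staying in the Weyl chamber `W^d`, all of
whose steps are positive unit coordinate vectors. -/
def IsPosWalk (d n : ℕ) (lam : Fin d → ℤ) (p : Fin (n + 1) → (Fin d → ℤ)) : Prop :=
  p 0 = lam ∧ (∀ k, p k ∈ WeylChamber d) ∧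
    ∀ k : Fin n, IsPosStep (p k.castSucc) (p k.succ)

/-- `f(λ;μ)`: the number of lattice walks from `lam` to `mu`, staying in the Weyl
chamber `W^d`, all of whose steps are positive unit coordinate vectors.  (Any such
walk has length `|μ| - |λ|`.) -/
noncomputable def posWalkCount (d : ℕ) (lam mu : Fin d → ℤ) : ℕ :=
  Nat.card {p : Fin (((∑ i, mu i) - ∑ i, lam i).toNat + 1) → (Fin d → ℤ) //
    IsPosWalk d ((∑ i, mu i) - ∑ i, lam i).toNat lam p ∧
      p (Fin.last ((∑ i, mu i) - ∑ i, lam i).toNat) = mu}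

namespace CWAux

variable {d : ℕ}

def WalkSet (d n : ℕ) (lam mu : Fin d → ℤ) : Type :=
  {p : Fin (n + 1) → (Fin d → ℤ) // IsPosWalk d n lam p ∧ p (Fin.last n) = mu}

lemma posWalkCount_eq_card (lam mu : Fin d → ℤ) (m : ℕ)
    (h : ((∑ i, mu i) - ∑ i, lam i).toNat = m) :
    posWalkCount d lam mu = Nat.card (WalkSet d m lam mu) := by
  subst h; rfl

lemma pi_single_inj {i j : Fin d} (h : (Pi.single i 1 : Fin d → ℤ) = Pi.single j 1) : i = j := by
  by_contra hne
  have h2 := congrFun h i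
  rw [Pi.single_eq_same, Pi.single_eq_of_ne hne] at h2
  exact one_ne_zero h2

noncomputable def steps {n : ℕ} {lam mu : Fin d → ℤ} (p : WalkSet d n lam mu) (k : Fin n) :
    Fin d :=
  (p.2.1.2.2 k).choose

lemma steps_spec {n : ℕ} {lam mu : Fin d → ℤ} (p : WalkSet d n lam mu) (k : Fin n) :
    p.1 k.succ = p.1 k.castSucc + Pi.single (steps p k) 1 :=
  (p.2.1.2.2 k).choose_spec

lemma steps_injective {n : ℕ} {lam mu : Fin d → ℤ} :
    Function.Injective (steps (d := d) (n := n) (lam := lam) (mu := mu)) := by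
  intro p q h
  apply Subtype.ext
  funext k
  induction k using Fin.induction with
  | zero => rw [p.2.1.1, q.2.1.1]
  | succ k ih => rw [steps_spec p k, steps_spec q k, ih, h]

instance {n : ℕ} {lam mu : Fin d → ℤ} : Finite (WalkSet d n lam mu) :=
  Finite.of_injective _ (steps_injective (d := d) (n := n) (lam := lam) (mu := mu))

lemma card_zero_self (lam : Fin d → ℤ) (hlam : lam ∈ WeylChamber d) :
    Nat.card (WalkSet d 0 lam lam) = 1 := by
  rw [Nat.card_eq_one_iff_unique]
  refine ⟨⟨fun p q => ?_⟩, ⟨⟨fun _ => lam, ⟨rfl, fun _ => hlam, fun k => k.elim0⟩, rfl⟩⟩⟩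
  apply Subtype.ext
  funext k
  have hk : k = 0 := Fin.ext (by omega)
  rw [hk, p.2.1.1, q.2.1.1]

lemma card_zero_ne {lam mu : Fin d → ℤ} (h : mu ≠ lam) :
    Nat.card (WalkSet d 0 lam mu) = 0 := by
  have : IsEmpty (WalkSet d 0 lam mu) := by
    refine ⟨fun p => h ?_⟩
    rw [← p.2.2]
    exact p.2.1.1
  exact Nat.card_of_isEmpty

lemma card_notmem {n : ℕ} {lam mu : Fin d → ℤ} (h : mu ∉ WeylChamber d) :
    Nat.card (WalkSet d n lam mu) = 0 := by
  have : IsEmpty (WalkSet d n lam mu) := ⟨fun p => h (p.2.2 ▸ p.2.1.2.1 _)⟩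
  exact Nat.card_of_isEmpty

noncomputable def extend {n : ℕ} {lam mu : Fin d → ℤ} (hmu : mu ∈ WeylChamber d) :
    (Σ i : Fin d, WalkSet d n lam (mu - Pi.single i 1)) → WalkSet d (n + 1) lam mu :=
  fun x =>
  ⟨Fin.snoc x.2.1 mu, by
    refine ⟨?_, ?_, ?_⟩
    · rw [show (0 : Fin (n+2)) = Fin.castSucc 0 from rfl, Fin.snoc_castSucc]
      exact x.2.2.1.1
    · intro k
      induction k using Fin.lastCases with
      | last => rw [Fin.snoc_last]; exact hmu
      | cast j => rw [Fin.snoc_castSucc]; exact x.2.2.1.2.1 j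
    · intro k
      induction k using Fin.lastCases with
      | last =>
        rw [Fin.succ_last, Fin.snoc_last, Fin.snoc_castSucc, x.2.2.2]
        exact ⟨x.1, (sub_add_cancel mu (Pi.single x.1 1)).symm⟩
      | cast j =>
        rw [Fin.succ_castSucc, Fin.snoc_castSucc, Fin.snoc_castSucc]
        exact x.2.2.1.2.2 j
    , by rw [Fin.snoc_last]⟩

lemma extend_bijective {n : ℕ} {lam mu : Fin d → ℤ} (hmu : mu ∈ WeylChamber d) :
    Function.Bijective (extend (d := d) (n := n) (lam := lam) hmu) := by
  constructor
  · rintro ⟨i, q⟩ ⟨i', q'⟩ h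
    have hval : (Fin.snoc q.1 mu : Fin (n+2) → Fin d → ℤ) = Fin.snoc q'.1 mu :=
      congrArg Subtype.val h
    have hq : q.1 = q'.1 := by
      funext k
      have := congrFun hval k.castSucc
      rwa [Fin.snoc_castSucc, Fin.snoc_castSucc] at this
    have hii : i = i' := by
      have h1 : mu - Pi.single i 1 = mu - Pi.single i' 1 := by
        rw [← q.2.2, ← q'.2.2, hq]
      exact pi_single_inj (sub_right_inj.mp h1)
    subst hii
    exact congrArg (Sigma.mk i) (Subtype.ext hq)
  · intro p
    have hlaststep := steps_spec p (Fin.last n)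
    rw [Fin.succ_last, p.2.2] at hlaststep
    have hend : p.1 (Fin.last n).castSucc = mu - Pi.single (steps p (Fin.last n)) 1 :=
      eq_sub_of_add_eq hlaststep.symm
    refine ⟨⟨steps p (Fin.last n), ⟨fun k => p.1 k.castSucc, ⟨?_, ?_, ?_⟩, hend⟩⟩, ?_⟩
    · exact p.2.1.1
    · exact fun k => p.2.1.2.1 _
    · intro k
      show IsPosStep (p.1 k.castSucc.castSucc) (p.1 k.succ.castSucc)
      rw [← Fin.succ_castSucc]
      exact p.2.1.2.2 k.castSucc
    · apply Subtype.ext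
      funext k
      show (Fin.snoc (fun k => p.1 k.castSucc) mu : Fin (n+2) → Fin d → ℤ) k = p.1 k
      induction k using Fin.lastCases with
      | last => rw [Fin.snoc_last, p.2.2]
      | cast j => rw [Fin.snoc_castSucc]

lemma nat_card_sigma {ι : Type} [Fintype ι] {β : ι → Type} [∀ i, Finite (β i)] :
    Nat.card (Sigma β) = ∑ i, Nat.card (β i) := by
  letI : ∀ i, Fintype (β i) := fun i => Fintype.ofFinite _
  simp [Nat.card_eq_fintype_card]

lemma card_succ {n : ℕ} {lam mu : Fin d → ℤ} (hmu : mu ∈ WeylChamber d) :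
    Nat.card (WalkSet d (n + 1) lam mu) =
      ∑ i : Fin d, Nat.card (WalkSet d n lam (mu - Pi.single i 1)) := by
  rw [← Nat.card_eq_of_bijective _ (extend_bijective (n := n) (lam := lam) hmu)]
  exact nat_card_sigma

lemma sum_single_one (i : Fin d) : ∑ j, (Pi.single i 1 : Fin d → ℤ) j = 1 := by
  rw [Finset.sum_pi_single']
  simp

lemma sum_sub_single (mu : Fin d → ℤ) (i : Fin d) :
    ∑ j, (mu - Pi.single i 1 : Fin d → ℤ) j = (∑ j, mu j) - 1 := by
  simp only [Pi.sub_apply, Finset.sum_sub_distrib, sum_single_one]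

lemma pwc_self (lam : Fin d → ℤ) (hlam : lam ∈ WeylChamber d) :
    posWalkCount d lam lam = 1 := by
  rw [posWalkCount_eq_card lam lam 0 (by simp), card_zero_self lam hlam]

lemma pwc_notmem {lam mu : Fin d → ℤ} (h : mu ∉ WeylChamber d) :
    posWalkCount d lam mu = 0 := by
  rw [posWalkCount_eq_card lam mu _ rfl, card_notmem h]

lemma pwc_small {lam mu : Fin d → ℤ} (h : (∑ i, mu i) ≤ ∑ i, lam i) (hne : mu ≠ lam) :
    posWalkCount d lam mu = 0 := by
  rw [posWalkCount_eq_card lam mu 0 (by omega), card_zero_ne hne]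

lemma pwc_rec {lam mu : Fin d → ℤ} (hmu : mu ∈ WeylChamber d)
    (h : (∑ i, lam i) < ∑ i, mu i) :
    posWalkCount d lam mu = ∑ i : Fin d, posWalkCount d lam (mu - Pi.single i 1) := by
  set m : ℕ := ((∑ i, mu i) - ∑ i, lam i).toNat - 1 with hm
  rw [posWalkCount_eq_card lam mu (m + 1) (by omega), card_succ hmu]
  refine Finset.sum_congr rfl fun i _ => ?_
  rw [posWalkCount_eq_card lam (mu - Pi.single i 1) m (by rw [sum_sub_single]; omega)]

section Series
open MvPowerSeries

variable (lam : Fin d → ℤ) (G : MvPowerSeries (Fin d) ℚ)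

noncomputable def Adet : MvPowerSeries (Fin d) ℚ :=
  Matrix.det (Matrix.of fun i j : Fin d =>
    (MvPowerSeries.X i : MvPowerSeries (Fin d) ℚ) ^ (lam j).toNat)

noncomputable def cF (ν : Fin d → ℕ) : ℚ :=
  MvPowerSeries.coeff (R := ℚ) (Finsupp.equivFunOnFinite.symm ν) (Adet lam * G)

noncomputable def aC (ν : Fin d → ℕ) : ℚ :=
  MvPowerSeries.coeff (R := ℚ) (Finsupp.equivFunOnFinite.symm ν) (Adet lam)

lemma monomial_prod {α : Type} (s : Finset α) (e : α → (Fin d →₀ ℕ)) :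
    (∏ a ∈ s, MvPowerSeries.monomial (R := ℚ) (e a) 1) =
      MvPowerSeries.monomial (R := ℚ) (∑ a ∈ s, e a) 1 := by
  induction s using Finset.cons_induction with
  | empty => simp [MvPowerSeries.monomial_zero_one]
  | cons a s ha ih =>
    rw [Finset.prod_cons, ih, MvPowerSeries.monomial_mul_monomial, Finset.sum_cons, one_mul]

lemma sum_single_eq (g : Fin d → ℕ) :
    ∑ i, Finsupp.single i (g i) = Finsupp.equivFunOnFinite.symm g := by
  ext j
  rw [Finsupp.finset_sum_apply]
  simp [Finsupp.single_apply]

lemma sum_single_perm (σ : Equiv.Perm (Fin d)) (g : Fin d → ℕ) :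
    ∑ i, Finsupp.single (σ i) (g i) =
      Finsupp.equivFunOnFinite.symm (fun j => g (σ.symm j)) := by
  rw [← Equiv.sum_comp σ.symm (fun i => Finsupp.single (σ i) (g i))]
  simp only [Equiv.apply_symm_apply]
  exact sum_single_eq _

lemma aC_eq (ν : Fin d → ℕ) :
    aC lam ν = ∑ σ : Equiv.Perm (Fin d),
      if ∀ j, ν (σ j) = (lam j).toNat then ((Equiv.Perm.sign σ : ℤ) : ℚ) else 0 := by
  unfold aC Adet
  rw [Matrix.det_apply, map_sum]
  refine Finset.sum_congr rfl fun σ _ => ?_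
  have hprod : ∏ i, (Matrix.of fun i j : Fin d =>
      (MvPowerSeries.X i : MvPowerSeries (Fin d) ℚ) ^ (lam j).toNat) (σ i) i =
      MvPowerSeries.monomial (R := ℚ) (∑ i, Finsupp.single (σ i) (lam i).toNat) 1 := by
    simp only [Matrix.of_apply, MvPowerSeries.X_pow_eq]
    exact monomial_prod _ _
  rw [hprod, sum_single_perm, Units.smul_def, map_zsmul, coeff_monomial]
  have hcond : (Finsupp.equivFunOnFinite.symm ν =
      Finsupp.equivFunOnFinite.symm fun j => (lam (σ.symm j)).toNat) ↔
      ∀ j, ν (σ j) = (lam j).toNat := by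
    constructor
    · intro h j
      have h2 := congrFun (Finsupp.equivFunOnFinite.symm.injective h) (σ j)
      simpa using h2
    · intro h
      apply congrArg
      funext j
      rw [← h (σ.symm j), Equiv.apply_symm_apply]
  rw [if_congr hcond rfl rfl]
  split_ifs <;> simp

variable {lam}

lemma aC_zero_coord (hlam : lam ∈ WeylChamber d) {ν : Fin d → ℕ} {i : Fin d}
    (h : ν i = 0) : aC lam ν = 0 := by
  rw [aC_eq]
  refine Finset.sum_eq_zero fun σ _ => ?_
  rw [if_neg]
  intro hC
  have h1 := hC (σ.symm i)
  rw [Equiv.apply_symm_apply, h] at h1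
  have h2 := hlam.2 (σ.symm i)
  omega

lemma aC_sum_ne {ν : Fin d → ℕ} (h : ∑ i, ν i ≠ ∑ i, (lam i).toNat) :
    aC lam ν = 0 := by
  rw [aC_eq]
  refine Finset.sum_eq_zero fun σ _ => ?_
  rw [if_neg]
  intro hC
  apply h
  rw [← Equiv.sum_comp σ ν]
  exact Finset.sum_congr rfl fun j _ => hC j

lemma aC_dec (hlam : lam ∈ WeylChamber d) {ν : Fin d → ℕ}
    (hdec : ∀ i j : Fin d, i ≤ j → ν j ≤ ν i) :
    aC lam ν = if ∀ j, ν j = (lam j).toNat then 1 else 0 := by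
  have hL : ∀ i j : Fin d, i < j → (lam j).toNat < (lam i).toNat := by
    intro i j hij
    have h1 := hlam.1 i j hij
    have h2 := hlam.2 j
    omega
  rw [aC_eq, Finset.sum_eq_single (1 : Equiv.Perm (Fin d))]
  · simp
  · intro σ _ hσ
    rw [if_neg]
    intro hC
    apply hσ
    have hmono : StrictMono ⇑σ := by
      intro a b hab
      have h3 : ν (σ b) < ν (σ a) := by rw [hC a, hC b]; exact hL a b hab
      by_contra hle
      push_neg at hle
      exact absurd (hdec _ _ hle) (not_le.mpr h3)
    have hid : ∀ a, σ a = a := by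
      haveI : WellFoundedLT (Fin d) := inferInstance
      have hsymm : StrictMono ⇑σ.symm := by
        intro a b hab
        rcases lt_trichotomy (σ.symm a) (σ.symm b) with h | h | h
        · exact h
        · exfalso
          have h2 := congrArg σ h
          simp only [Equiv.apply_symm_apply] at h2
          exact absurd h2 hab.ne
        · exfalso
          have h2 := hmono h
          simp only [Equiv.apply_symm_apply] at h2
          exact absurd (h2.trans hab) (lt_irrefl _)
      intro a
      have h1 : a ≤ σ a := hmono.le_apply
      have h2 : σ a ≤ a := by
        have h3 := hsymm.le_apply (x := σ a)
        simpa using h3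
      exact le_antisymm h2 h1
    exact Equiv.ext fun a => hid a
  · intro h
    exact absurd (Finset.mem_univ _) h

lemma aC_swap {ν : Fin d → ℕ} {i j : Fin d} (hij : i ≠ j) :
    aC lam (ν ∘ Equiv.swap i j) = - aC lam ν := by
  rw [aC_eq, aC_eq]
  rw [Fintype.sum_equiv (Equiv.mulLeft (Equiv.swap i j))
    (fun σ => if ∀ k, (ν ∘ Equiv.swap i j) (σ k) = (lam k).toNat
      then ((Equiv.Perm.sign σ : ℤ) : ℚ) else 0)
    (fun τ => if ∀ k, ν (τ k) = (lam k).toNat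
      then -((Equiv.Perm.sign τ : ℤ) : ℚ) else 0) ?_]
  · rw [← Finset.sum_neg_distrib]
    refine Finset.sum_congr rfl fun τ _ => ?_
    split_ifs <;> simp
  · intro σ
    simp only [Function.comp_apply, Equiv.coe_mulLeft, Equiv.Perm.mul_apply,
      Equiv.Perm.sign_mul, Equiv.Perm.sign_swap hij, Units.val_mul]
    split_ifs <;> push_cast <;> ring

variable {G}

lemma symm_sub_single (ν : Fin d → ℕ) (i : Fin d) :
    Finsupp.equivFunOnFinite.symm ν - Finsupp.single i 1 =
      Finsupp.equivFunOnFinite.symm (ν - Pi.single i 1) := by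
  ext j
  rw [Finsupp.tsub_apply]
  by_cases hj : j = i
  · subst hj
    simp
  · simp [Finsupp.single_apply, Pi.single_apply, hj, Ne.symm hj]

lemma c_rec (hG : (1 - ∑ i : Fin d, MvPowerSeries.X i) * G = 1) (ν : Fin d → ℕ) :
    cF lam G ν = aC lam ν +
      ∑ i : Fin d, (if ν i = 0 then 0 else cF lam G (ν - Pi.single i 1)) := by
  have hF : Adet lam * G = Adet lam +
      ∑ i : Fin d, MvPowerSeries.X i * (Adet lam * G) := by
    rw [← Finset.sum_mul]
    linear_combination (Adet lam) * hG
  unfold cF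
  conv_lhs => rw [hF]
  rw [map_add, map_sum]
  congr 1
  refine Finset.sum_congr rfl fun i _ => ?_
  rw [show (MvPowerSeries.X i : MvPowerSeries (Fin d) ℚ) =
    MvPowerSeries.monomial (R := ℚ) (Finsupp.single i 1) 1 from rfl]
  rw [MvPowerSeries.coeff_monomial_mul, one_mul]
  by_cases hz : ν i = 0
  · rw [if_neg, if_pos hz]
    rw [Finsupp.single_le_iff]
    simp [hz]
  · rw [if_pos, if_neg hz, symm_sub_single]
    rw [Finsupp.single_le_iff]
    simp
    omega

lemma nsum_sub {ν : Fin d → ℕ} {i : Fin d} (h : ν i ≠ 0) :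
    ∑ j, (ν - Pi.single i 1 : Fin d → ℕ) j = (∑ j, ν j) - 1 := by
  have hupd : (ν - Pi.single i 1 : Fin d → ℕ) = Function.update ν i (ν i - 1) := by
    funext j
    by_cases hj : j = i
    · subst hj; simp
    · simp [Function.update_of_ne hj, Pi.single_eq_of_ne hj]
  have hle : ν i ≤ ∑ j, ν j := Finset.single_le_sum (fun j _ => Nat.zero_le _)
    (Finset.mem_univ i)
  rw [hupd, Finset.sum_update_of_mem (Finset.mem_univ i)]
  have herase : ∑ x ∈ Finset.univ \ {i}, ν x = (∑ j, ν j) - ν i := by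
    have h2 := Finset.add_sum_erase Finset.univ ν (Finset.mem_univ i)
    rw [show Finset.univ \ {i} = Finset.univ.erase i from by
      rw [Finset.erase_eq]]
    omega
  rw [herase]
  omega

lemma czero_lt (hG : (1 - ∑ i : Fin d, MvPowerSeries.X i) * G = 1) (n : ℕ) :
    ∀ ν : Fin d → ℕ, ∑ i, ν i ≤ n → ∑ i, ν i < ∑ i, (lam i).toNat →
      cF lam G ν = 0 := by
  induction n using Nat.strong_induction_on with
  | _ n ih =>
    intro ν hn hlt
    rw [c_rec hG, aC_sum_ne (by omega), zero_add]
    refine Finset.sum_eq_zero fun i _ => ?_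
    by_cases hz : ν i = 0
    · rw [if_pos hz]
    · rw [if_neg hz]
      have hsum := nsum_sub hz
      have hpos : 1 ≤ ν i := Nat.one_le_iff_ne_zero.mpr hz
      have hle : ν i ≤ ∑ j, ν j := Finset.single_le_sum (fun j _ => Nat.zero_le _)
        (Finset.mem_univ i)
      exact ih (n - 1) (by omega) _ (by omega) (by omega)

lemma czero_coord (hG : (1 - ∑ i : Fin d, MvPowerSeries.X i) * G = 1)
    (hlam : lam ∈ WeylChamber d) (n : ℕ) :
    ∀ ν : Fin d → ℕ, ∑ i, ν i ≤ n → ∀ i, ν i = 0 → cF lam G ν = 0 := by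
  induction n using Nat.strong_induction_on with
  | _ n ih =>
    intro ν hn i hi
    rw [c_rec hG, aC_zero_coord hlam hi, zero_add]
    refine Finset.sum_eq_zero fun j _ => ?_
    by_cases hz : ν j = 0
    · rw [if_pos hz]
    · rw [if_neg hz]
      have hji : j ≠ i := fun h => hz (h ▸ hi)
      have hsum := nsum_sub hz
      have hle : ν j ≤ ∑ k, ν k := Finset.single_le_sum (fun k _ => Nat.zero_le _)
        (Finset.mem_univ j)
      refine ih (n - 1) (by omega) _ (by omega) i ?_
      simp [Pi.single_eq_of_ne (Ne.symm hji), hi]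

lemma c_swap (hG : (1 - ∑ i : Fin d, MvPowerSeries.X i) * G = 1) {i j : Fin d}
    (hij : i ≠ j) (n : ℕ) :
    ∀ ν : Fin d → ℕ, ∑ k, ν k ≤ n →
      cF lam G (ν ∘ Equiv.swap i j) = - cF lam G ν := by
  induction n using Nat.strong_induction_on with
  | _ n ih =>
    intro ν hn
    have hcomp : ∀ k : Fin d, (ν ∘ Equiv.swap i j - Pi.single k 1 : Fin d → ℕ) =
        (ν - Pi.single (Equiv.swap i j k) 1) ∘ Equiv.swap i j := by
      intro k
      funext m
      simp only [Function.comp_apply, Pi.sub_apply]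
      congr 1
      by_cases hm : m = k
      · subst hm; simp
      · rw [Pi.single_eq_of_ne hm, Pi.single_eq_of_ne]
        exact fun h => hm ((Equiv.swap i j).injective h)
    have hsν : ∑ k, (ν ∘ Equiv.swap i j) k = ∑ k, ν k :=
      Equiv.sum_comp (Equiv.swap i j) ν
    rw [c_rec hG, c_rec hG, aC_swap hij]
    have hterm : ∀ k : Fin d,
        (if (ν ∘ Equiv.swap i j) k = 0 then 0
          else cF lam G (ν ∘ Equiv.swap i j - Pi.single k 1)) =
        (if ν (Equiv.swap i j k) = 0 then (0:ℚ)
          else - cF lam G (ν - Pi.single (Equiv.swap i j k) 1)) := by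
      intro k
      simp only [Function.comp_apply]
      by_cases hz : ν (Equiv.swap i j k) = 0
      · rw [if_pos hz, if_pos hz]
      · rw [if_neg hz, if_neg hz, hcomp k]
        have hsum := nsum_sub hz
        have hle : ν (Equiv.swap i j k) ≤ ∑ m, ν m :=
          Finset.single_le_sum (fun m _ => Nat.zero_le _) (Finset.mem_univ _)
        have hs2 : ∑ m, ((ν - Pi.single (Equiv.swap i j k) 1 : Fin d → ℕ) ∘
            Equiv.swap i j) m = ∑ m, (ν - Pi.single (Equiv.swap i j k) 1 : Fin d → ℕ) m :=
          Equiv.sum_comp (Equiv.swap i j) _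
        exact ih (n - 1) (by omega) _ (by omega)
    rw [Finset.sum_congr rfl fun k _ => hterm k]
    have hre : ∑ k : Fin d, (if ν (Equiv.swap i j k) = 0 then (0:ℚ)
          else - cF lam G (ν - Pi.single (Equiv.swap i j k) 1)) =
        ∑ m : Fin d, (if ν m = 0 then (0:ℚ) else - cF lam G (ν - Pi.single m 1)) :=
      Fintype.sum_equiv (Equiv.swap i j) _ _ (fun x => rfl)
    rw [hre]
    have hneg : ∑ m : Fin d, (if ν m = 0 then (0:ℚ) else - cF lam G (ν - Pi.single m 1)) =
        - ∑ m : Fin d, (if ν m = 0 then (0:ℚ) else cF lam G (ν - Pi.single m 1)) := by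
      rw [← Finset.sum_neg_distrib]
      refine Finset.sum_congr rfl fun m _ => ?_
      split_ifs <;> simp
    rw [hneg]
    ring

lemma c_repeat (hG : (1 - ∑ i : Fin d, MvPowerSeries.X i) * G = 1) {ν : Fin d → ℕ}
    {i j : Fin d} (hij : i ≠ j) (hrep : ν i = ν j) : cF lam G ν = 0 := by
  have hνs : ν ∘ Equiv.swap i j = ν := by
    funext k
    simp only [Function.comp_apply]
    rcases eq_or_ne k i with rfl | hki
    · rw [Equiv.swap_apply_left]; exact hrep.symm
    · rcases eq_or_ne k j with rfl | hkj
      · rw [Equiv.swap_apply_right]; exact hrep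
      · rw [Equiv.swap_apply_of_ne_of_ne hki hkj]
  have := c_swap (lam := lam) hG hij (∑ k, ν k) ν le_rfl
  rw [hνs] at this
  linarith

lemma c_eq_f (hlam : lam ∈ WeylChamber d)
    (hG : (1 - ∑ i : Fin d, MvPowerSeries.X i) * G = 1) (n : ℕ) :
    ∀ ν : Fin d → ℕ, ∑ i, ν i ≤ n → (∀ i j : Fin d, i ≤ j → ν j ≤ ν i) →
      cF lam G ν = (posWalkCount d lam (fun i => (ν i : ℤ)) : ℚ) := by
  induction n using Nat.strong_induction_on with
  | _ n ih =>
    intro ν hn hdec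
    by_cases hrep : ∃ i j : Fin d, i ≠ j ∧ ν i = ν j
    · obtain ⟨i, j, hij, hre⟩ := hrep
      rw [c_repeat (lam := lam) hG hij hre]
      have hnot : (fun i => (ν i : ℤ)) ∉ WeylChamber d := by
        intro hmem
        rcases hij.lt_or_gt with h | h
        · have := hmem.1 i j h
          simp only at this
          omega
        · have := hmem.1 j i h
          simp only at this
          omega
      rw [pwc_notmem hnot]
      simp
    · push_neg at hrep
      by_cases hzero : ∃ i, ν i = 0
      · obtain ⟨i, hi⟩ := hzero
        rw [czero_coord (lam := lam) hG hlam n ν hn i hi]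
        have hnot : (fun i => (ν i : ℤ)) ∉ WeylChamber d := by
          intro hmem
          have := hmem.2 i
          simp only at this
          omega
        rw [pwc_notmem hnot]
        simp
      · push_neg at hzero
        have hstrict : ∀ i j : Fin d, i < j → ν j < ν i := fun i j h =>
          lt_of_le_of_ne (hdec i j h.le) (hrep j i h.ne')
        have hmem : (fun i => (ν i : ℤ)) ∈ WeylChamber d := by
          refine ⟨fun i j h => ?_, fun i => ?_⟩
          · have := hstrict i j h
            simp only
            omega
          · have := hzero i
            simp only
            omega
        have hlamsum : ∑ i, lam i = ∑ i, ((lam i).toNat : ℤ) :=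
          Finset.sum_congr rfl fun i _ => (Int.toNat_of_nonneg (hlam.2 i).le).symm
        by_cases hL : ∀ j, ν j = (lam j).toNat
        · have hsL : ∑ i, ν i = ∑ i, (lam i).toNat :=
            Finset.sum_congr rfl fun i _ => hL i
          rw [c_rec hG, aC_dec hlam hdec, if_pos hL]
          have hterm0 : ∑ i : Fin d,
              (if ν i = 0 then (0:ℚ) else cF lam G (ν - Pi.single i 1)) = 0 := by
            refine Finset.sum_eq_zero fun i _ => ?_
            rw [if_neg (hzero i)]
            have hsum := nsum_sub (hzero i)
            have hle : ν i ≤ ∑ j, ν j := Finset.single_le_sum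
              (fun j _ => Nat.zero_le _) (Finset.mem_univ i)
            have h1 := hzero i
            exact czero_lt (lam := lam) hG n _ (by omega) (by omega)
          have hμ : (fun i => (ν i : ℤ)) = lam := funext fun i => by
            simp only [hL i]
            exact Int.toNat_of_nonneg (hlam.2 i).le
          rw [hterm0, add_zero, hμ, pwc_self lam hlam]
          simp
        · have hμne : (fun i => (ν i : ℤ)) ≠ lam := by
            intro h
            apply hL
            intro j
            have := congrFun h j
            omega
          by_cases hsum : ∑ i, ν i ≤ ∑ i, (lam i).toNat
          · rw [c_rec hG, aC_dec hlam hdec, if_neg hL]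
            have hterm0 : ∑ i : Fin d,
                (if ν i = 0 then (0:ℚ) else cF lam G (ν - Pi.single i 1)) = 0 := by
              refine Finset.sum_eq_zero fun i _ => ?_
              rw [if_neg (hzero i)]
              have hs := nsum_sub (hzero i)
              have hle : ν i ≤ ∑ j, ν j := Finset.single_le_sum
                (fun j _ => Nat.zero_le _) (Finset.mem_univ i)
              have h1 := hzero i
              exact czero_lt (lam := lam) hG n _ (by omega) (by omega)
            have hle2 : ∑ i, (fun k => (ν k : ℤ)) i ≤ ∑ i, lam i := by
              simp only
              rw [hlamsum]
              push_cast
              exact_mod_cast hsum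
            rw [hterm0, pwc_small hle2 hμne]
            simp
          · push_neg at hsum
            rw [c_rec hG, aC_dec hlam hdec, if_neg hL, zero_add]
            have hstep : ∀ i : Fin d,
                (if ν i = 0 then (0:ℚ) else cF lam G (ν - Pi.single i 1)) =
                (posWalkCount d lam ((fun k => (ν k : ℤ)) - Pi.single i 1) : ℚ) := by
              intro i
              rw [if_neg (hzero i)]
              have h1 := hzero i
              have hcast : (fun k => (((ν - Pi.single i 1 : Fin d → ℕ)) k : ℤ)) =
                  (fun k => (ν k : ℤ)) - Pi.single i 1 := by
                funext k
                simp only [Pi.sub_apply]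
                by_cases hk : k = i
                · subst hk
                  simp only [Pi.single_eq_same]
                  omega
                · simp [Pi.single_eq_of_ne hk]
              rw [← hcast]
              have hs := nsum_sub h1
              have hle : ν i ≤ ∑ j, ν j := Finset.single_le_sum
                (fun j _ => Nat.zero_le _) (Finset.mem_univ i)
              have hLd : 0 < ∑ j, ν j := by omega
              refine ih (n - 1) (by omega) _ (by omega) ?_
              intro a b hab
              rcases eq_or_lt_of_le hab with rfl | h
              · exact le_rfl
              · have h2 := hstrict a b h
                have va : (Pi.single i 1 : Fin d → ℕ) a = if a = i then 1 else 0 := by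
                  rcases eq_or_ne a i with rfl | ha
                  · simp
                  · simp [ha, Pi.single_eq_of_ne ha]
                have vb : (Pi.single i 1 : Fin d → ℕ) b = if b = i then 1 else 0 := by
                  rcases eq_or_ne b i with rfl | hb
                  · simp
                  · simp [hb, Pi.single_eq_of_ne hb]
                simp only [Pi.sub_apply, va, vb]
                split_ifs <;> omega
            rw [Finset.sum_congr rfl fun i _ => hstep i]
            have hlt : ∑ i, lam i < ∑ i, (fun k => (ν k : ℤ)) i := by
              simp only
              rw [hlamsum]
              push_cast
              exact_mod_cast hsum
            rw [pwc_rec hmem hlt, Nat.cast_sum]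

end Series
end CWAux

/-- For `λ ∈ W^d`, the series `F̄ = a_λ(x) · Σ_{k ≥ 0} (x₁ + ⋯ + x_d)^k`
(where `G = Σ_{k ≥ 0} (x₁ + ⋯ + x_d)^k` is characterised by
`(1 - (x₁ + ⋯ + x_d)) · G = 1`) has, for every `μ` in the closure of `W^d`,
coefficient of `x^μ` equal to `f(λ;μ)`. -/
theorem coeff_extension_eq_walkCount (d : ℕ) (hd : 1 ≤ d) (lam : Fin d → ℤ)
    (hlam : lam ∈ WeylChamber d)
    (G : MvPowerSeries (Fin d) ℚ)
    (hG : (1 - ∑ i : Fin d, MvPowerSeries.X i) * G = 1)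
    (mu : Fin d → ℤ) (hmono : ∀ i j : Fin d, i ≤ j → mu j ≤ mu i)
    (hpos : ∀ i, 0 ≤ mu i) :
    MvPowerSeries.coeff (R := ℚ) (Finsupp.equivFunOnFinite.symm fun i => (mu i).toNat)
        (Matrix.det (Matrix.of fun i j : Fin d =>
          (MvPowerSeries.X i : MvPowerSeries (Fin d) ℚ) ^ (lam j).toNat) * G) =
      (posWalkCount d lam mu : ℚ) := by
  have hdec : ∀ i j : Fin d, i ≤ j → (mu j).toNat ≤ (mu i).toNat := by
    intro i j hij
    have := hmono i j hij
    have := hpos j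
    omega
  have h := CWAux.c_eq_f (lam := lam) hlam hG (∑ i, (mu i).toNat)
    (fun i => (mu i).toNat) le_rfl hdec
  have hμ : (fun i => (((mu i).toNat : ℤ))) = mu :=
    funext fun i => Int.toNat_of_nonneg (hpos i)
  rw [hμ] at h
  exact h
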